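/- Let k ∈ ℂ, ω = e^{2πi/3}, and suppose |ω^{j−1}k − 2nπ| ≥ π/6 for all n ∈ ℤ and j = 1,2,3. Let Z(k) = −(4/3) sin(k/2) sin(ωk/2) sin(ω²k/2) and Ξ(k) = exp(|Im(k/2)| + |Im(ωk/2)| + |Im(ω²k/2)|). Then there is an absolute constant C_π > 0 (independent of k) such that |Z(k)| > (4/(3C_π))·Ξ(k). -/

import Mathlib

open Set Filter Topology

private lemma sin_sq_shift (t : ℝ) (n : ℤ) :
    Real.sin (t + n * Real.pi) ^ 2 = Real.sin t ^ 2 := by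
  have h1 : Real.sin ((n : ℝ) * Real.pi) = 0 := Real.sin_int_mul_pi n
  have h2 : Real.cos ((n : ℝ) * Real.pi) ^ 2 = 1 := by
    have := Real.sin_sq_add_cos_sq ((n : ℝ) * Real.pi)
    nlinarith
  rw [Real.sin_add, h1]
  nlinarith [h2]

set_option maxHeartbeats 1000000 in
private lemma abs_sin_lower (z : ℂ)
    (h : ∀ n : ℤ, Real.pi / 12 ≤ ‖z - (((n : ℝ) * Real.pi : ℝ) : ℂ)‖) :
    Real.exp |z.im| < 25 * ‖Complex.sin z‖ := by
  set x := z.re with hx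
  set y := z.im with hy
  have hpi := Real.pi_gt_d6
  have hpi2 := Real.pi_lt_d2
  have habs : ‖Complex.sin z‖ =
      Real.sqrt (Real.sin x ^ 2 + Real.sinh y ^ 2) := by
    have : Complex.sin z = ((Real.sin x * Real.cosh y : ℝ) : ℂ) +
        ((Real.cos x * Real.sinh y : ℝ) : ℂ) * Complex.I := by
      rw [Complex.sin_eq]; push_cast; ring
    rw [this, Complex.norm_add_mul_I]
    congr 1
    have h1 := Real.sin_sq_add_cos_sq x
    have h2 := Real.cosh_sq y
    nlinarith
  rw [habs]
  have hkey : (Real.exp |y| / 25) ^ 2 < Real.sin x ^ 2 + Real.sinh y ^ 2 := by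
    have hsabs : Real.sinh |y| ^ 2 = Real.sinh y ^ 2 := by
      rcases abs_cases y with ⟨h', _⟩ | ⟨h', _⟩ <;> rw [h'] <;> simp [Real.sinh_neg] <;> ring
    rcases le_or_gt 1 |y| with h1 | h1
    · -- large |y| : use sinh
      have hpos : (0 : ℝ) < Real.exp |y| := Real.exp_pos _
      have hE : Real.exp |y| ≤ 3 * Real.sinh |y| := by
        rw [Real.sinh_eq, Real.exp_neg]
        have he : (2.7 : ℝ) < Real.exp |y| := by
          have h27 : (2.7 : ℝ) < Real.exp 1 := by
            have := Real.exp_one_gt_d9; linarith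
          calc (2.7 : ℝ) < Real.exp 1 := h27
            _ ≤ Real.exp |y| := Real.exp_le_exp.2 h1
        have hu : Real.exp |y| * (Real.exp |y|)⁻¹ = 1 := mul_inv_cancel₀ hpos.ne'
        nlinarith [hu, he, hpos, mul_pos hpos hpos]
      have hS : 0 < Real.sinh |y| := Real.sinh_pos_iff.2 (by linarith)
      have hsq2 : Real.exp |y| ^ 2 ≤ 9 * Real.sinh |y| ^ 2 := by nlinarith
      nlinarith [sq_nonneg (Real.sin x), mul_pos hS hS]
    · -- |y| < 1
      have he : Real.exp |y| < 2.7182818286 := by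
        have := Real.exp_one_lt_d9
        calc Real.exp |y| < Real.exp 1 := Real.exp_lt_exp.2 h1
          _ < 2.7182818286 := by linarith
      rcases le_or_gt (Real.pi / 24) |y| with h2 | h2
      · have hs : Real.pi / 24 ≤ Real.sinh |y| :=
          le_trans h2 (Real.self_le_sinh_iff.2 (abs_nonneg y))
        have hA : Real.exp |y| ^ 2 < 7.39 := by
          nlinarith [Real.exp_pos |y|]
        have hB : (0.0171 : ℝ) < Real.sinh y ^ 2 := by
          nlinarith [hs, hpi, hsabs]
        nlinarith [sq_nonneg (Real.sin x), hA, hB]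
      · -- |y| small : use sin x
        set n : ℤ := round (x / Real.pi) with hn
        clear_value n
        have hπ0 : (0 : ℝ) < Real.pi := Real.pi_pos
        have hd := h n
        have habs2 : ‖z - (((n : ℝ) * Real.pi : ℝ) : ℂ)‖ =
            Real.sqrt ((x - n * Real.pi) ^ 2 + y ^ 2) := by
          rw [Complex.norm_def, Complex.normSq_apply]
          simp [Complex.sub_re, Complex.sub_im, ← hx, ← hy]
          ring_nf
        rw [habs2] at hd
        have hd2 : (Real.pi / 12) ^ 2 ≤ (x - n * Real.pi) ^ 2 + y ^ 2 := by
          have := (Real.le_sqrt (by positivity) (by positivity)).1 hd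
          exact this
        set t : ℝ := x - n * Real.pi with ht
        clear_value t
        have htlb : Real.pi / 14 ≤ |t| := by
          by_contra hc
          push_neg at hc
          have hc' := abs_lt.1 hc
          have : t ^ 2 < (Real.pi / 14) ^ 2 := sq_lt_sq' hc'.1 hc'.2
          nlinarith [sq_nonneg y, sq_abs y, abs_nonneg y]
        have htub : |t| ≤ Real.pi / 2 := by
          have hr := abs_sub_round (x / Real.pi)
          have : t = Real.pi * (x / Real.pi - n) := by
            field_simp [ht]; linarith
          rw [this, abs_mul, abs_of_pos hπ0, ← hn] at *
          linarith [mul_le_mul_of_nonneg_left hr hπ0.le]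
        have hsint : 1 / 7 ≤ Real.sin |t| := by
          have h27 : 2 / Real.pi * (Real.pi / 14) = 1 / 7 := by
            field_simp; ring
          calc (1 / 7 : ℝ) = 2 / Real.pi * (Real.pi / 14) := h27.symm
            _ ≤ 2 / Real.pi * |t| :=
              mul_le_mul_of_nonneg_left htlb (by positivity)
            _ ≤ Real.sin |t| := Real.mul_le_sin (abs_nonneg t) htub
        have hsq : Real.sin x ^ 2 = Real.sin t ^ 2 := by
          have : x = t + n * Real.pi := by rw [ht]; ring
          rw [this, sin_sq_shift]
        have hsinabs : Real.sin |t| ^ 2 = Real.sin t ^ 2 := by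
          rcases abs_cases t with ⟨h', _⟩ | ⟨h', _⟩ <;> rw [h'] <;> simp [Real.sin_neg]
        have hx2 : (1 / 7 : ℝ) ^ 2 ≤ Real.sin x ^ 2 := by
          rw [hsq, ← hsinabs]
          nlinarith [hsint]
        nlinarith [sq_nonneg (Real.sinh y), Real.exp_pos |y|, hx2, he]
  have h0 : 0 ≤ Real.exp |y| / 25 := by positivity
  have := (Real.lt_sqrt h0).2 hkey
  linarith

set_option maxHeartbeats 1000000 in
/-- Lower bound for `Z(k) = -(4/3) sin(k/2) sin(ωk/2) sin(ω²k/2)` away from its zeros: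
there is an absolute constant `C_π > 0` with `|Z(k)| > (4/(3 C_π)) Ξ(k)` whenever
`|ω^{j-1}k − 2nπ| ≥ π/6` for all `n ∈ ℤ`, `j = 1,2,3`. -/
theorem Z_lower_bound
    (ω : ℂ) (hω : ω = Complex.exp (2 * (Real.pi : ℂ) * Complex.I / 3)) :
    ∃ C : ℝ, 0 < C ∧ ∀ k : ℂ,
      (∀ j : ℕ, (j = 1 ∨ j = 2 ∨ j = 3) → ∀ n : ℤ,
        Real.pi / 6 ≤ ‖ω ^ (j - 1) * k - 2 * (n : ℂ) * Real.pi‖) →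
      4 / (3 * C) * Real.exp (|(k / 2).im| + |(ω * k / 2).im| + |(ω ^ 2 * k / 2).im|) <
        ‖-(4 / 3) * Complex.sin (k / 2) * Complex.sin (ω * k / 2) *
          Complex.sin (ω ^ 2 * k / 2)‖ := by
  refine ⟨15625, by norm_num, fun k hk => ?_⟩
  have bridge : ∀ (w : ℂ), (∀ n : ℤ, Real.pi / 6 ≤ ‖w - 2 * (n : ℂ) * Real.pi‖) →
      Real.exp |(w / 2).im| < 25 * ‖Complex.sin (w / 2)‖ := by
    intro w hw
    apply abs_sin_lower
    intro n
    have h1 := hw n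
    have h2 : ‖w / 2 - (((n : ℝ) * Real.pi : ℝ) : ℂ)‖ =
        ‖w - 2 * (n : ℂ) * Real.pi‖ / 2 := by
      rw [show w / 2 - (((n : ℝ) * Real.pi : ℝ) : ℂ) = (w - 2 * (n : ℂ) * Real.pi) / 2 by
        push_cast; ring, norm_div]
      simp
    rw [h2]
    linarith
  have e1 := bridge k (by
    intro n
    have := hk 1 (Or.inl rfl) n
    simpa using this)
  have e2 := bridge (ω * k) (by
    intro n
    have := hk 2 (Or.inr (Or.inl rfl)) n
    simpa using this)
  have e3 := bridge (ω ^ 2 * k) (by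
    intro n
    have := hk 3 (Or.inr (Or.inr rfl)) n
    simpa using this)
  rw [show ω ^ 2 * k / 2 = ω ^ 2 * k / 2 from rfl] at e3
  have habs : ‖-(4 / 3) * Complex.sin (k / 2) * Complex.sin (ω * k / 2) *
      Complex.sin (ω ^ 2 * k / 2)‖ = 4 / 3 * (‖Complex.sin (k / 2)‖ *
      ‖Complex.sin (ω * k / 2)‖ * ‖Complex.sin (ω ^ 2 * k / 2)‖) := by
    rw [norm_mul, norm_mul, norm_mul]
    have : ‖-(4 / 3 : ℂ)‖ = 4 / 3 := by
      rw [norm_neg]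
      rw [show (4 / 3 : ℂ) = ((4 / 3 : ℝ) : ℂ) by push_cast; ring, Complex.norm_real]
      norm_num
    rw [this]; ring
  rw [habs, Real.exp_add, Real.exp_add]
  set a := Real.exp |(k / 2).im| with ha
  set b := Real.exp |(ω * k / 2).im| with hb
  set c := Real.exp |(ω ^ 2 * k / 2).im| with hc
  set s1 := ‖Complex.sin (k / 2)‖
  set s2 := ‖Complex.sin (ω * k / 2)‖
  set s3 := ‖Complex.sin (ω ^ 2 * k / 2)‖
  have pa : 0 < a := Real.exp_pos _
  have pb : 0 < b := Real.exp_pos _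
  have pc : 0 < c := Real.exp_pos _
  have h12 : a * b < 25 * s1 * (25 * s2) :=
    mul_lt_mul'' e1 e2 pa.le pb.le
  have h123 : a * b * c < 25 * s1 * (25 * s2) * (25 * s3) :=
    mul_lt_mul'' h12 e3 (by positivity) pc.le
  nlinarith
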